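/- Every polynomial $p \in \mathbb{R}[t_1,\dots,t_m]$ invariant under the full orthogonal group $\mathrm{O}_m(\mathbb{R})$ is a polynomial in $t_1^2 + \cdots + t_m^2$. -/

import Mathlib

open MvPolynomial

/-- Every polynomial `p ∈ ℝ[t₁,…,t_m]` invariant under the full orthogonal group
`O_m(ℝ)` (all linear maps preserving the quadratic form `∑ tᵢ²`) is a polynomial
in `t₁² + ⋯ + t_m²`. -/
theorem orthogonal_invariant_poly (m : ℕ) (p : MvPolynomial (Fin m) ℝ)
    (hinv : ∀ g : (Fin m → ℝ) ≃ₗ[ℝ] (Fin m → ℝ),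
      (∀ t : Fin m → ℝ, ∑ i, (g t i) ^ 2 = ∑ i, (t i) ^ 2) →
      ∀ t : Fin m → ℝ, eval (g t) p = eval t p) :
    ∃ q : Polynomial ℝ, ∀ t : Fin m → ℝ,
      eval t p = q.eval (∑ i, (t i) ^ 2) := by
  rcases Nat.eq_zero_or_pos m with hm | hm
  · subst hm
    refine ⟨Polynomial.C (eval (fun _ => 0) p), fun t => ?_⟩
    have ht : t = fun _ => 0 := funext fun i => i.elim0
    simp [ht]
  · set i0 : Fin m := ⟨0, hm⟩
    set P : Polynomial ℝ :=
      aeval (fun i : Fin m => if i = i0 then (Polynomial.X : Polynomial ℝ) else 0) p with hPdef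
    have hP : ∀ x : ℝ, P.eval x = eval (fun i => if i = i0 then x else 0) p := by
      intro x
      rw [hPdef, MvPolynomial.aeval_def, polynomial_eval_eval₂]
      rw [show ((Polynomial.evalRingHom x).comp (algebraMap ℝ (Polynomial ℝ))) = RingHom.id ℝ from
        RingHom.ext fun r => by simp]
      rw [eval₂_id]
      have hfun : (fun s => Polynomial.eval x (if s = i0 then Polynomial.X else 0))
          = fun i => if i = i0 then x else 0 := by
        funext i; split <;> simp
      rw [hfun]
    -- evenness
    have hneg : ∀ t : Fin m → ℝ, eval (-t) p = eval t p := by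
      intro t
      have := hinv (LinearEquiv.neg ℝ) (fun s => by simp) t
      simpa using this
    have heval : ∀ x : ℝ, P.eval (-x) = P.eval x := by
      intro x
      rw [hP, hP]
      have : (fun i => if i = i0 then -x else 0) = -(fun i => if i = i0 then x else 0) := by
        funext i; by_cases h : i = i0 <;> simp [h]
      rw [this, hneg]
    have hcomp : P.comp (-Polynomial.X) = P := by
      apply Polynomial.funext
      intro r
      simp [Polynomial.eval_comp, heval]
    have hco : ∀ n, (P.comp (-Polynomial.X)).coeff n = (-1) ^ n * P.coeff n := by
      intro n
      rw [Polynomial.comp_eq_sum_left, Polynomial.sum_def, Polynomial.finset_sum_coeff]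
      have hterm : ∀ e ∈ P.support, (Polynomial.C (P.coeff e) * (-Polynomial.X) ^ e).coeff n
          = if n = e then P.coeff e * (-1) ^ e else 0 := by
        intro e _
        rw [neg_pow, ← Polynomial.C_1, ← Polynomial.C_neg, ← Polynomial.C_pow, ← mul_assoc,
          ← Polynomial.C_mul, Polynomial.coeff_C_mul, Polynomial.coeff_X_pow, mul_ite, mul_one,
          mul_zero]
      rw [Finset.sum_congr rfl hterm, Finset.sum_ite_eq]
      split
      · ring
      · rename_i h
        rw [Polynomial.notMem_support_iff.mp h, mul_zero]
    have hodd : ∀ n, ¬ (2 ∣ n) → P.coeff n = 0 := by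
      intro n hn
      have h1 : P.coeff n = (-1) ^ n * P.coeff n := by rw [← hco, hcomp]
      have h2 : ((-1 : ℝ)) ^ n = -1 := Odd.neg_one_pow (Nat.odd_iff.mpr (by omega))
      rw [h2, neg_one_mul] at h1
      linarith
    set q : Polynomial ℝ := Polynomial.contract 2 P with hqdef
    have hPq : Polynomial.expand ℝ 2 q = P := by
      ext n
      rw [Polynomial.coeff_expand (by norm_num : 0 < 2)]
      split
      · rename_i h
        rw [hqdef, Polynomial.coeff_contract two_ne_zero, Nat.div_mul_cancel h]
      · rename_i h
        exact (hodd n h).symm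
    have hq : ∀ x : ℝ, P.eval x = q.eval (x ^ 2) := by
      intro x
      rw [← hPq, Polynomial.expand_eval]
    -- geometric part
    refine ⟨q, fun t => ?_⟩
    set t' : EuclideanSpace ℝ (Fin m) := (WithLp.equiv 2 (Fin m → ℝ)).symm t with ht'
    have hsum : ∀ x : EuclideanSpace ℝ (Fin m), ∑ i, (x i) ^ 2 = ‖x‖ ^ 2 := by
      intro x
      rw [EuclideanSpace.norm_eq, Real.sq_sqrt (by positivity)]
      apply Finset.sum_congr rfl
      intro i _
      rw [Real.norm_eq_abs, sq_abs]
    set r : ℝ := ‖t'‖ with hr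
    set v : EuclideanSpace ℝ (Fin m) := EuclideanSpace.single i0 r with hv
    have hnv : ‖v‖ = ‖t'‖ := by
      rw [hv, EuclideanSpace.norm_single, Real.norm_eq_abs, abs_of_nonneg (norm_nonneg _)]
    set g : EuclideanSpace ℝ (Fin m) ≃ₗᵢ[ℝ] EuclideanSpace ℝ (Fin m) :=
      Submodule.reflection (ℝ ∙ (v - t'))ᗮ with hg
    have hgv : g v = t' := Submodule.reflection_sub hnv
    set E : EuclideanSpace ℝ (Fin m) ≃ₗ[ℝ] (Fin m → ℝ) :=
      (EuclideanSpace.equiv (Fin m) ℝ).toLinearEquiv with hE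
    set g' : (Fin m → ℝ) ≃ₗ[ℝ] (Fin m → ℝ) := E.symm.trans (g.toLinearEquiv.trans E) with hg'
    have hg'app : ∀ s : Fin m → ℝ, g' s = E (g (E.symm s)) := fun s => rfl
    have hg'norm : ∀ s : Fin m → ℝ, ∑ i, (g' s i) ^ 2 = ∑ i, (s i) ^ 2 := by
      intro s
      have h1 : ∑ i, (g' s i) ^ 2 = ∑ i, ((g (E.symm s)) i) ^ 2 := rfl
      rw [h1, hsum, g.norm_map]
      have h2 : ∑ i, ((E.symm s) i) ^ 2 = ∑ i, (s i) ^ 2 := rfl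
      rw [hsum] at h2
      exact h2.symm ▸ rfl
    have key := hinv g' hg'norm (E v)
    have hEv : E.symm (E v) = v := E.symm_apply_apply v
    have hgEv : g' (E v) = t := by
      rw [hg'app, hEv, hgv]
      rfl
    rw [hgEv] at key
    have hEvfun : (E v : Fin m → ℝ) = fun i => if i = i0 then r else 0 := by
      funext i
      show v i = _
      rw [hv, EuclideanSpace.single_apply]
    rw [hEvfun] at key
    rw [key, ← hP, hq]
    congr 1
    rw [hr]
    exact (hsum t').symm
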